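/- The bondage number of the cycle C_n (n ≥ 3) equals 3 if n ≡ 1 (mod 3), and 2 otherwise. -/

import Mathlib

open SimpleGraph

variable {V : Type*}

/-- `S` is a dominating set of `G`: every vertex is in `S` or has a neighbor in `S`. -/
def SimpleGraph.IsDomSet (G : SimpleGraph V) (S : Finset V) : Prop :=
  ∀ v : V, v ∈ S ∨ ∃ u ∈ S, G.Adj u v

/-- The domination number of a finite graph. -/
noncomputable def SimpleGraph.domNum [Fintype V] (G : SimpleGraph V) : ℕ :=
  sInf {n | ∃ S : Finset V, S.card = n ∧ G.IsDomSet S}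

/-- The bondage number: the minimum size of a set of edges of `G` whose removal
increases the domination number. -/
noncomputable def SimpleGraph.bondageNum [Fintype V] (G : SimpleGraph V) : ℕ :=
  sInf {n | ∃ B : Finset (Sym2 V), B.card = n ∧ ↑B ⊆ G.edgeSet ∧
    G.domNum < (G.deleteEdges ↑B).domNum}

section Aux
open scoped Fin.NatCast Fin.CommRing
open Finset

lemma domNum_le {V : Type*} [Fintype V] (G : SimpleGraph V) (S : Finset V)
    (h : G.IsDomSet S) : G.domNum ≤ S.card :=
  Nat.sInf_le ⟨S, rfl, h⟩

lemma exists_domSet {V : Type*} [Fintype V] (G : SimpleGraph V) :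
    ∃ S : Finset V, S.card = G.domNum ∧ G.IsDomSet S := by
  have h : {n | ∃ S : Finset V, S.card = n ∧ G.IsDomSet S}.Nonempty :=
    ⟨(Finset.univ : Finset V).card, Finset.univ, rfl, fun v => Or.inl (Finset.mem_univ v)⟩
  exact Nat.sInf_mem h

-- counting lemma
lemma cycle_count {n : ℕ} (hn : 3 ≤ n) (H : SimpleGraph (Fin n)) (hH : H ≤ cycleGraph n)
    (S : Finset (Fin n)) (hS : H.IsDomSet S) (T : Finset (Fin n)) (hTS : T ⊆ S)
    (hT : ∀ t ∈ T, ∀ u, ¬ H.Adj t u) : n + 2 * T.card ≤ 3 * S.card := by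
  haveI : NeZero n := ⟨by omega⟩
  set f : Fin n → Finset (Fin n) := fun v => if v ∈ T then {v} else {v-1, v, v+1} with hf
  have hcover : (Finset.univ : Finset (Fin n)) ⊆ S.biUnion f := by
    intro v _
    rcases hS v with hv | ⟨u, hu, huv⟩
    · refine Finset.mem_biUnion.2 ⟨v, hv, ?_⟩
      by_cases h : v ∈ T <;> simp [hf, h]
    · have huT : u ∉ T := fun h => hT u h v huv
      refine Finset.mem_biUnion.2 ⟨u, hu, ?_⟩
      have hadj := hH huv
      rw [cycleGraph_adj'] at hadj
      have h1 : (1 : Fin n).val = 1 := by simp [Fin.val_one', Nat.mod_eq_of_lt (by omega : 1 < n)]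
      rcases hadj with h | h
      · have h2 : u - v = 1 := Fin.ext (by rw [h1]; exact h)
        have h3 : v = u - 1 := by
          have h4 : u = 1 + v := sub_eq_iff_eq_add.mp h2
          rw [h4, add_sub_cancel_left]
        simp [hf, huT, h3]
      · have h2 : v - u = 1 := Fin.ext (by rw [h1]; exact h)
        have h3 : v = u + 1 := by
          have h4 : v = 1 + u := sub_eq_iff_eq_add.mp h2
          rw [h4, add_comm]
        simp [hf, huT, h3]
  have hcard : n ≤ ∑ v ∈ S, (f v).card := by
    calc n = (Finset.univ : Finset (Fin n)).card := by simp
    _ ≤ (S.biUnion f).card := Finset.card_le_card hcover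
    _ ≤ ∑ v ∈ S, (f v).card := Finset.card_biUnion_le
  have hsplit : ∑ v ∈ S \ T, (f v).card + ∑ v ∈ T, (f v).card = ∑ v ∈ S, (f v).card :=
    Finset.sum_sdiff hTS
  have h1 : ∑ v ∈ T, (f v).card = T.card := by
    have : ∑ v ∈ T, (f v).card = ∑ v ∈ T, 1 :=
      Finset.sum_congr rfl (fun v hv => by simp [hf, hv])
    rw [this, Finset.sum_const, smul_eq_mul, mul_one]
  have h2 : ∑ v ∈ S \ T, (f v).card ≤ 3 * (S \ T).card := by
    rw [mul_comm, ← Finset.sum_const_nat (fun x _ => rfl)]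
    refine Finset.sum_le_sum fun v hv => ?_
    have hv' : v ∉ T := (Finset.mem_sdiff.mp hv).2
    simp only [hf, hv', if_false]
    exact le_trans (Finset.card_insert_le _ _)
      (by simpa using Nat.add_le_add_right (Finset.card_insert_le (v : Fin n) {v+1}) 1)
  have h3 : (S \ T).card = S.card - T.card := Finset.card_sdiff_of_subset hTS
  have h4 : T.card ≤ S.card := Finset.card_le_card hTS
  omega

-- path domination construction
lemma pathDom {V : Type*} [DecidableEq V] (H : SimpleGraph V) (u : ℕ → V) (m : ℕ) (hm : 1 ≤ m)
    (hadj : ∀ k : ℕ, k + 2 ≤ m → H.Adj (u k) (u (k+1))) :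
    ∃ S : Finset V, S.card ≤ (m + 2)/3 ∧
      ∀ j : ℕ, j < m → (u j) ∈ S ∨ ∃ w ∈ S, H.Adj w (u j) := by
  refine ⟨(Finset.range ((m+2)/3)).image (fun i => u (min (3*i+1) (m-1))),
    le_trans Finset.card_image_le (by simp), ?_⟩
  intro j hj
  have hi : j / 3 < (m+2)/3 := by omega
  set i := j / 3 with hidef
  have hmem : u (min (3*i+1) (m-1)) ∈
      (Finset.range ((m+2)/3)).image (fun i => u (min (3*i+1) (m-1))) :=
    Finset.mem_image_of_mem _ (Finset.mem_range.mpr hi)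
  by_cases hle : 3*i+1 ≤ m-1
  · rw [min_eq_left hle] at hmem
    rcases (by omega : j = 3*i ∨ j = 3*i+1 ∨ j = 3*i+2) with h | h | h
    · exact Or.inr ⟨_, hmem, by rw [h]; exact (hadj (3*i) (by omega)).symm⟩
    · exact Or.inl (by rw [h]; exact hmem)
    · exact Or.inr ⟨_, hmem, by rw [h]; exact hadj (3*i+1) (by omega)⟩
  · have hj' : j = m - 1 := by omega
    rw [min_eq_right (by omega)] at hmem
    exact Or.inl (by rw [hj']; exact hmem)

lemma val_one {n : ℕ} (hn : 2 ≤ n) [NeZero n] : (1 : Fin n).val = 1 := by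
  simp [Fin.val_one', Nat.mod_eq_of_lt hn]

lemma cycle_adj_succ {n : ℕ} (hn : 2 ≤ n) (v : Fin n) :
    haveI : NeZero n := ⟨by omega⟩
    (cycleGraph n).Adj v (v+1) := by
  haveI : NeZero n := ⟨by omega⟩
  rw [cycleGraph_adj']
  right
  rw [add_sub_cancel_left, val_one hn]

lemma succ_edge_inj {n : ℕ} (hn : 3 ≤ n) {v w : Fin n}
    (h : haveI : NeZero n := ⟨by omega⟩; (s(v,v+1) : Sym2 (Fin n)) = s(w,w+1)) : v = w := by
  haveI : NeZero n := ⟨by omega⟩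
  rw [Sym2.eq_iff] at h
  rcases h with ⟨h1, _⟩ | ⟨h1, h2⟩
  · exact h1
  · exfalso
    have h3 : v + 1 + 1 = v := by rw [h2]; exact h1.symm
    have h4 : v + (1+1) = v + 0 := by rw [← add_assoc, add_zero]; exact h3
    have h5 : (1+1 : Fin n) = 0 := add_left_cancel h4
    have h6 := congrArg Fin.val h5
    rw [Fin.add_def, Fin.val_zero] at h6
    simp only [val_one (by omega : 2 ≤ n)] at h6
    rw [Nat.mod_eq_of_lt (by omega : 1 + 1 < n)] at h6
    omega

lemma cycle_edge_mem {n : ℕ} (hn : 3 ≤ n) {e : Sym2 (Fin n)}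
    (he : e ∈ (cycleGraph n).edgeSet) :
    haveI : NeZero n := ⟨by omega⟩
    ∃ v : Fin n, e = s(v, v+1) := by
  haveI : NeZero n := ⟨by omega⟩
  induction e with
  | h a b =>
    rw [SimpleGraph.mem_edgeSet, cycleGraph_adj'] at he
    rcases he with h | h
    · refine ⟨b, ?_⟩
      have : a - b = 1 := Fin.ext (by rw [val_one (by omega : 2 ≤ n)]; exact h)
      have ha : a = b + 1 := by rw [← this]; ring
      rw [ha, Sym2.eq_swap]
    · refine ⟨a, ?_⟩
      have : b - a = 1 := Fin.ext (by rw [val_one (by omega : 2 ≤ n)]; exact h)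
      have hb : b = a + 1 := by rw [← this]; ring
      rw [hb]

lemma mod_helper {n x y : ℕ} (hn : 3 ≤ n) (hx : x < n) (hy : y < n) :
    (n - y + x) % n = 1 ↔ (x = y + 1 ∨ (y = n - 1 ∧ x = 0)) := by
  rcases le_or_gt y x with h | h
  · rw [show n - y + x = (x - y) + n by omega, Nat.add_mod_right,
      Nat.mod_eq_of_lt (by omega)]
    omega
  · rw [Nat.mod_eq_of_lt (by omega)]
    omega

lemma cycle_adj_iff {n : ℕ} (hn : 3 ≤ n) (u v : Fin n) :
    (cycleGraph n).Adj u v ↔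
      (u.val + 1 = v.val ∨ v.val + 1 = u.val ∨
        (u.val = 0 ∧ v.val = n - 1) ∨ (v.val = 0 ∧ u.val = n - 1)) := by
  rw [cycleGraph_adj', Fin.sub_def, Fin.sub_def]
  simp only [Fin.val_mk]
  rw [mod_helper hn u.isLt v.isLt, mod_helper hn v.isLt u.isLt]
  have := u.isLt; have := v.isLt
  omega

lemma arcDom {n : ℕ} [NeZero n] (hn : 3 ≤ n) (B : Set (Sym2 (Fin n))) (a : Fin n)
    (m : ℕ) (hm : 1 ≤ m)
    (hB : ∀ k : ℕ, k + 2 ≤ m → s(a + (k : Fin n), a + (k : Fin n) + 1) ∉ B) :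
    ∃ S : Finset (Fin n), S.card ≤ (m+2)/3 ∧
      ∀ j : ℕ, j < m → (a + (j : Fin n)) ∈ S ∨
        ∃ w ∈ S, ((cycleGraph n).deleteEdges B).Adj w (a + (j : Fin n)) := by
  refine pathDom ((cycleGraph n).deleteEdges B) (fun k => a + (k : Fin n)) m hm ?_
  intro k hk
  have hcast : ((k+1 : ℕ) : Fin n) = (k : Fin n) + 1 := by push_cast; ring
  show ((cycleGraph n).deleteEdges B).Adj (a + (k : Fin n)) (a + ((k+1 : ℕ) : Fin n))
  rw [hcast, ← add_assoc, SimpleGraph.deleteEdges_adj]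
  exact ⟨cycle_adj_succ (by omega) _, hB k hk⟩

-- val of a "shift" being small
lemma one_add_cast_val {n : ℕ} [NeZero n] {k : ℕ} (hk : 1 + k < n) :
    ((1 : Fin n) + (k : Fin n)).val = 1 + k := by
  rw [Fin.add_def, val_one (by omega)]
  simp only [Fin.val_mk, Fin.val_natCast]
  rw [Nat.mod_eq_of_lt (by omega : k < n), Nat.mod_eq_of_lt hk]

-- key cancellation: a + 1 + ↑k = a → False  (when 1 + k < n)
lemma shift_ne {n : ℕ} [NeZero n] {a : Fin n} {k : ℕ} (hk : 1 + k < n)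
    (h : a + 1 + (k : Fin n) = a) : False := by
  have h2 : a + (1 + (k : Fin n)) = a + 0 := by rw [← add_assoc, add_zero]; exact h
  have h3 : (1 : Fin n) + (k : Fin n) = 0 := add_left_cancel h2
  have h4 := congrArg Fin.val h3
  rw [one_add_cast_val hk, Fin.val_zero] at h4
  omega

lemma cover_eq {n : ℕ} [NeZero n] (a v : Fin n) : v = a + (((v - a).val : ℕ) : Fin n) := by
  rw [Fin.cast_val_eq_self]
  abel

lemma delOne {n : ℕ} (hn : 3 ≤ n) (B : Finset (Sym2 (Fin n))) (hsub : ↑B ⊆ (cycleGraph n).edgeSet)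
    (hcard : B.card ≤ 1) : ((cycleGraph n).deleteEdges ↑B).domNum ≤ (n+2)/3 := by
  haveI : NeZero n := ⟨by omega⟩
  rcases Nat.le_one_iff_eq_zero_or_eq_one.mp hcard with h | h
  · rw [Finset.card_eq_zero] at h
    subst h
    obtain ⟨S, hc, hd⟩ := arcDom hn (↑(∅ : Finset (Sym2 (Fin n)))) 0 n (by omega)
      (fun k _ => by simp)
    refine le_trans (domNum_le _ S ?_) hc
    intro v
    have := hd ((v - 0).val) (v - 0).isLt
    rwa [← cover_eq 0 v] at this
  · obtain ⟨e, he⟩ := Finset.card_eq_one.mp h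
    have hee : e ∈ (cycleGraph n).edgeSet := hsub (by simp [he])
    obtain ⟨w, hw⟩ := cycle_edge_mem hn hee
    have hB : ∀ k : ℕ, k + 2 ≤ n →
        s((w+1) + (k : Fin n), (w+1) + (k : Fin n) + 1) ∉ (↑B : Set (Sym2 (Fin n))) := by
      intro k hk hmem
      rw [he, Finset.coe_singleton, Set.mem_singleton_iff, hw] at hmem
      have h5 := succ_edge_inj hn hmem
      exact shift_ne (by omega : 1 + k < n) h5
    obtain ⟨S, hc, hd⟩ := arcDom hn (↑B) (w + 1) n (by omega) hB
    refine le_trans (domNum_le _ S ?_) hc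
    intro v
    have := hd ((v - (w+1)).val) (v - (w+1)).isLt
    rwa [← cover_eq (w+1) v] at this

lemma shift_ne' {n : ℕ} [NeZero n] {a b : Fin n} {k : ℕ} (hk : 1 + k < n)
    (h : a + 1 + (k : Fin n) = b) : (b - a).val = 1 + k := by
  have h2 : b - a = 1 + (k : Fin n) := by rw [← h]; ring
  rw [h2, one_add_cast_val hk]

lemma delTwo {n : ℕ} (hn : 3 ≤ n) (hn1 : n % 3 = 1) (B : Finset (Sym2 (Fin n)))
    (hsub : ↑B ⊆ (cycleGraph n).edgeSet) (hcard : B.card ≤ 2) :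
    ((cycleGraph n).deleteEdges ↑B).domNum ≤ (n+2)/3 := by
  haveI : NeZero n := ⟨by omega⟩
  rcases le_or_gt B.card 1 with h | h
  · exact delOne hn B hsub h
  have h2 : B.card = 2 := by omega
  obtain ⟨x, y, hxy, hBxy⟩ := Finset.card_eq_two.mp h2
  obtain ⟨v₁, hv₁⟩ := cycle_edge_mem hn (hsub (by simp [hBxy]) : x ∈ _)
  obtain ⟨v₂, hv₂⟩ := cycle_edge_mem hn (hsub (by simp [hBxy]) : y ∈ _)
  have hv12 : v₁ ≠ v₂ := fun h => hxy (by rw [hv₁, hv₂, h])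
  set a := (v₂ - v₁).val with hadef
  set b := (v₁ - v₂).val with hbdef
  have ha : 1 ≤ a := by
    rcases Nat.eq_zero_or_pos a with h | h
    · exfalso; exact hv12 (by
        have : v₂ - v₁ = 0 := Fin.ext (by rw [Fin.val_zero]; exact h)
        have := sub_eq_zero.mp this
        exact this.symm)
    · exact h
  have hb : 1 ≤ b := by
    rcases Nat.eq_zero_or_pos b with h | h
    · exfalso; exact hv12 (by
        have : v₁ - v₂ = 0 := Fin.ext (by rw [Fin.val_zero]; exact h)
        exact sub_eq_zero.mp this)
    · exact h
  have haln : a < n := (v₂ - v₁).isLt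
  have hbln : b < n := (v₁ - v₂).isLt
  have hab : a + b = n := by
    have hz : (v₂ - v₁) + (v₁ - v₂) = 0 := by ring
    have := congrArg Fin.val hz
    rw [Fin.add_def, Fin.val_zero] at this
    simp only [Fin.val_mk] at this
    rcases le_or_gt n (a + b) with hle | hlt
    · rw [Nat.mod_eq_sub_mod hle, Nat.mod_eq_of_lt (by omega)] at this
      omega
    · rw [Nat.mod_eq_of_lt hlt] at this
      omega
  have hB1 : ∀ k : ℕ, k + 2 ≤ a →
      s((v₁+1) + (k : Fin n), (v₁+1) + (k : Fin n) + 1) ∉ (↑B : Set (Sym2 (Fin n))) := by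
    intro k hk hmem
    rw [hBxy] at hmem
    simp only [Finset.coe_insert, Finset.coe_singleton, Set.mem_insert_iff,
      Set.mem_singleton_iff] at hmem
    rcases hmem with hmem | hmem
    · rw [hv₁] at hmem
      exact shift_ne (by omega : 1 + k < n) (succ_edge_inj hn hmem)
    · rw [hv₂] at hmem
      have := shift_ne' (by omega : 1 + k < n) (succ_edge_inj hn hmem)
      omega
  have hB2 : ∀ k : ℕ, k + 2 ≤ b →
      s((v₂+1) + (k : Fin n), (v₂+1) + (k : Fin n) + 1) ∉ (↑B : Set (Sym2 (Fin n))) := by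
    intro k hk hmem
    rw [hBxy] at hmem
    simp only [Finset.coe_insert, Finset.coe_singleton, Set.mem_insert_iff,
      Set.mem_singleton_iff] at hmem
    rcases hmem with hmem | hmem
    · rw [hv₁] at hmem
      have := shift_ne' (by omega : 1 + k < n) (succ_edge_inj hn hmem)
      omega
    · rw [hv₂] at hmem
      exact shift_ne (by omega : 1 + k < n) (succ_edge_inj hn hmem)
  obtain ⟨S₁, hc₁, hd₁⟩ := arcDom hn (↑B) (v₁ + 1) a ha hB1
  obtain ⟨S₂, hc₂, hd₂⟩ := arcDom hn (↑B) (v₂ + 1) b hb hB2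
  have hdom : ((cycleGraph n).deleteEdges ↑B).IsDomSet (S₁ ∪ S₂) := by
    intro v
    set t := (v - (v₁ + 1)).val with htdef
    have htn : t < n := (v - (v₁ + 1)).isLt
    rcases lt_or_ge t a with hta | hta
    · rcases hd₁ t hta with hmem | ⟨w, hw, hadj⟩
      · exact Or.inl (Finset.mem_union_left _ (by rwa [← cover_eq (v₁+1) v] at hmem))
      · exact Or.inr ⟨w, Finset.mem_union_left _ hw, by rwa [← cover_eq (v₁+1) v] at hadj⟩
    · have hveq : v = (v₂ + 1) + ((t - a : ℕ) : Fin n) := by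
        rw [cover_eq (v₁+1) v]
        rw [show ((t : ℕ) : Fin n) = ((a + (t - a) : ℕ) : Fin n) by rw [Nat.add_sub_cancel' hta],
          Nat.cast_add, Fin.cast_val_eq_self]
        ring
      have htb : t - a < b := by omega
      rcases hd₂ (t - a) htb with hmem | ⟨w, hw, hadj⟩
      · exact Or.inl (Finset.mem_union_right _ (by rwa [← hveq] at hmem))
      · exact Or.inr ⟨w, Finset.mem_union_right _ hw, by rwa [← hveq] at hadj⟩
  refine le_trans (domNum_le _ _ hdom) ?_
  have := Finset.card_union_le S₁ S₂
  have h3 : (a+2)/3 + (b+2)/3 ≤ (n+2)/3 := by omega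
  omega

lemma cycle_domNum_le {n : ℕ} (hn : 3 ≤ n) : (cycleGraph n).domNum ≤ (n+2)/3 := by
  have h := delOne hn ∅ (by simp) (by simp)
  rwa [Finset.coe_empty, SimpleGraph.deleteEdges_empty] at h

lemma cycle_domNum_ge {n : ℕ} (hn : 3 ≤ n) : n ≤ 3 * (cycleGraph n).domNum := by
  obtain ⟨S, hc, hd⟩ := exists_domSet (cycleGraph n)
  have := cycle_count hn (cycleGraph n) le_rfl S hd ∅ (Finset.empty_subset _) (by simp)
  simp only [Finset.card_empty, mul_zero, add_zero] at this
  omega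

lemma incTwo {n : ℕ} (hn : 3 ≤ n) (hn1 : n % 3 ≠ 1) :
    ∃ B : Finset (Sym2 (Fin n)), B.card = 2 ∧ ↑B ⊆ (cycleGraph n).edgeSet ∧
      (cycleGraph n).domNum < ((cycleGraph n).deleteEdges ↑B).domNum := by
  haveI : NeZero n := ⟨by omega⟩
  set p0 : Fin n := ⟨0, by omega⟩
  set p1 : Fin n := ⟨1, by omega⟩
  set p2 : Fin n := ⟨2, by omega⟩
  set B : Finset (Sym2 (Fin n)) := {s(p0,p1), s(p1,p2)} with hBdef
  have hne : (s(p0,p1) : Sym2 (Fin n)) ≠ s(p1,p2) := by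
    simp [Sym2.eq_iff, Fin.ext_iff, p0, p1, p2]
  have hcard : B.card = 2 := by
    rw [hBdef, Finset.card_insert_of_notMem (by simp [hne]), Finset.card_singleton]
  have hsub : ↑B ⊆ (cycleGraph n).edgeSet := by
    intro e he
    simp only [hBdef, Finset.coe_insert, Finset.coe_singleton, Set.mem_insert_iff,
      Set.mem_singleton_iff] at he
    rcases he with rfl | rfl <;>
      · rw [SimpleGraph.mem_edgeSet, cycle_adj_iff hn]
        simp [p0, p1, p2]
  set H := (cycleGraph n).deleteEdges ↑B with hHdef
  have hiso : ∀ u, ¬ H.Adj p1 u := by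
    intro u hadj
    rw [hHdef, SimpleGraph.deleteEdges_adj] at hadj
    obtain ⟨hc, hmem⟩ := hadj
    rw [cycle_adj_iff hn] at hc
    have hu := u.isLt
    rcases hc with h | h | h | h
    · have : u = p2 := Fin.ext (by simp [p1, p2] at h ⊢; omega)
      subst this
      exact hmem (by simp [hBdef])
    · have : u = p0 := Fin.ext (by simp [p0, p1] at h ⊢; omega)
      subst this
      exact hmem (by rw [Sym2.eq_swap]; simp [hBdef])
    · simp [p1] at h
    · simp [p1] at h; omega
  refine ⟨B, hcard, hsub, ?_⟩
  obtain ⟨S, hc, hd⟩ := exists_domSet H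
  have hp1S : p1 ∈ S := by
    rcases hd p1 with h | ⟨u, _, hadj⟩
    · exact h
    · exact absurd hadj.symm (hiso u)
  have hcount := cycle_count hn H (SimpleGraph.deleteEdges_le _) S hd {p1}
    (Finset.singleton_subset_iff.mpr hp1S)
    (by intro t ht u; rw [Finset.mem_singleton] at ht; subst ht; exact hiso u)
  rw [Finset.card_singleton] at hcount
  have hle := cycle_domNum_le hn
  show (cycleGraph n).domNum < H.domNum
  omega

lemma incThree {n : ℕ} (hn : 3 ≤ n) (hn1 : n % 3 = 1) :
    ∃ B : Finset (Sym2 (Fin n)), B.card = 3 ∧ ↑B ⊆ (cycleGraph n).edgeSet ∧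
      (cycleGraph n).domNum < ((cycleGraph n).deleteEdges ↑B).domNum := by
  have hn4 : 4 ≤ n := by omega
  haveI : NeZero n := ⟨by omega⟩
  set p0 : Fin n := ⟨0, by omega⟩
  set p1 : Fin n := ⟨1, by omega⟩
  set p2 : Fin n := ⟨2, by omega⟩
  set p3 : Fin n := ⟨3, by omega⟩
  set B : Finset (Sym2 (Fin n)) := {s(p0,p1), s(p1,p2), s(p2,p3)} with hBdef
  have hcard : B.card = 3 := by
    rw [hBdef]
    rw [Finset.card_insert_of_notMem (by simp [Sym2.eq_iff, Fin.ext_iff, p0, p1, p2, p3]),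
      Finset.card_insert_of_notMem (by simp [Sym2.eq_iff, Fin.ext_iff, p1, p2, p3]),
      Finset.card_singleton]
  have hsub : ↑B ⊆ (cycleGraph n).edgeSet := by
    intro e he
    simp only [hBdef, Finset.coe_insert, Finset.coe_singleton, Set.mem_insert_iff,
      Set.mem_singleton_iff] at he
    rcases he with rfl | rfl | rfl <;>
      · rw [SimpleGraph.mem_edgeSet, cycle_adj_iff hn]
        simp [p0, p1, p2, p3]
  set H := (cycleGraph n).deleteEdges ↑B with hHdef
  have hiso1 : ∀ u, ¬ H.Adj p1 u := by
    intro u hadj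
    rw [hHdef, SimpleGraph.deleteEdges_adj] at hadj
    obtain ⟨hc, hmem⟩ := hadj
    rw [cycle_adj_iff hn] at hc
    have hu := u.isLt
    rcases hc with h | h | h | h
    · have : u = p2 := Fin.ext (by simp [p1, p2] at h ⊢; omega)
      subst this; exact hmem (by simp [hBdef])
    · have : u = p0 := Fin.ext (by simp [p0, p1] at h ⊢; omega)
      subst this; exact hmem (by rw [Sym2.eq_swap]; simp [hBdef])
    · simp [p1] at h
    · simp [p1] at h; omega
  have hiso2 : ∀ u, ¬ H.Adj p2 u := by
    intro u hadj
    rw [hHdef, SimpleGraph.deleteEdges_adj] at hadj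
    obtain ⟨hc, hmem⟩ := hadj
    rw [cycle_adj_iff hn] at hc
    have hu := u.isLt
    rcases hc with h | h | h | h
    · have : u = p3 := Fin.ext (by simp [p2, p3] at h ⊢; omega)
      subst this; exact hmem (by simp [hBdef])
    · have : u = p1 := Fin.ext (by simp [p1, p2] at h ⊢; omega)
      subst this; exact hmem (by rw [Sym2.eq_swap]; simp [hBdef])
    · simp [p2] at h
    · simp [p2] at h; omega
  refine ⟨B, hcard, hsub, ?_⟩
  obtain ⟨S, hc, hd⟩ := exists_domSet H
  have hp1S : p1 ∈ S := by
    rcases hd p1 with h | ⟨u, _, hadj⟩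
    · exact h
    · exact absurd hadj.symm (hiso1 u)
  have hp2S : p2 ∈ S := by
    rcases hd p2 with h | ⟨u, _, hadj⟩
    · exact h
    · exact absurd hadj.symm (hiso2 u)
  have hT : ({p1, p2} : Finset (Fin n)).card = 2 := by
    rw [Finset.card_insert_of_notMem (by simp [Fin.ext_iff, p1, p2]), Finset.card_singleton]
  have hcount := cycle_count hn H (SimpleGraph.deleteEdges_le _) S hd {p1, p2}
    (by intro t ht; simp only [Finset.mem_insert, Finset.mem_singleton] at ht
        rcases ht with rfl | rfl
        exacts [hp1S, hp2S])
    (by intro t ht u; simp only [Finset.mem_insert, Finset.mem_singleton] at ht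
        rcases ht with rfl | rfl
        exacts [hiso1 u, hiso2 u])
  rw [hT] at hcount
  have hle := cycle_domNum_le hn
  show (cycleGraph n).domNum < H.domNum
  omega

end Aux

theorem bondage_cycle (n : ℕ) (hn : 3 ≤ n) :
    (SimpleGraph.cycleGraph n).bondageNum = if n % 3 = 1 then 3 else 2 := by
  rw [SimpleGraph.bondageNum]
  split_ifs with h
  · apply le_antisymm
    · obtain ⟨B, hc, hs, hlt⟩ := incThree hn h
      exact Nat.sInf_le ⟨B, hc, hs, hlt⟩
    · obtain ⟨B₀, hc₀, hs₀, hlt₀⟩ := incThree hn h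
      refine le_csInf ⟨3, B₀, hc₀, hs₀, hlt₀⟩ ?_
      rintro m ⟨B, hBc, hsub, hlt⟩
      by_contra hcon
      push_neg at hcon
      have h1 := delTwo hn h B hsub (by omega)
      have h2 := cycle_domNum_ge hn
      omega
  · apply le_antisymm
    · obtain ⟨B, hc, hs, hlt⟩ := incTwo hn h
      exact Nat.sInf_le ⟨B, hc, hs, hlt⟩
    · obtain ⟨B₀, hc₀, hs₀, hlt₀⟩ := incTwo hn h
      refine le_csInf ⟨2, B₀, hc₀, hs₀, hlt₀⟩ ?_
      rintro m ⟨B, hBc, hsub, hlt⟩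
      by_contra hcon
      push_neg at hcon
      have h1 := delOne hn B hsub (by omega)
      have h2 := cycle_domNum_ge hn
      omega
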